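/- Fix strikes 0 < K_1 < … < K_N, a maturity T > 0, a barrier U > 0, a strike K ∈ (0,U], positive parameters σ^* = (σ^*_1,σ^*_2), and an index i with K_i ≤ K and K_i < U such that the index j̄ = min{ j : K_j ≥ U + (U−K_i)·σ^*_2/σ^*_1 } is well defined. Extend the Black–Scholes prices to zero time-to-maturity by C^bs(S,K',0,·) = (S−K')^+ and P^bs(S,K',0,·) = (K'−S)^+. Let S : [0,T] → ℝ be continuous with 0 ≤ S(0) ≤ U, and for each t ∈ [0,T) let Σ_t : {K_1,…,K_N} × (0,T−t] → (0,∞) be an implied-volatility function. Define H = inf{ t ∈ [0,T] : S(t) ≥ U } (with H = +∞ if this set is empty) and θ = min(H,T). Assume that for every t ∈ [0,T) with S(t) = U, the surface Σ_t satisfies the upper beliefs generated by the PCLVG implied volatility surface Σ^{σ^*} on (0,T−t]. Then the super-replication inequality holds: ((K_i−K)/(U−K_i))·(S(θ) − U) + ((U−K)/(U−K_i))·( P^bs(S(θ), K_i, T−θ, Σ_θ(K_i,T−θ)) − (K_i/U)·C^bs(S(θ), K_{j̄}, T−θ, Σ_θ(K_{j̄},T−θ)) ) ≥ (K − S(θ))^+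 · 1_{the set {t ∈ [0,T] : S(t) ≥ U} is empty}. -/

import Mathlib

open MeasureTheory Filter Set

/-- Standard normal cumulative distribution function. -/
noncomputable def stdNormalCDF (x : ℝ) : ℝ :=
  (Real.sqrt (2 * Real.pi))⁻¹ * ∫ y in Set.Iic x, Real.exp (-(y ^ 2) / 2)

/-- Black–Scholes call price with zero interest and dividend rates. -/
noncomputable def bsCall (S K τ σ : ℝ) : ℝ :=
  let d1 := (Real.log (S / K) + σ ^ 2 * τ / 2) / (σ * Real.sqrt τ)
  S * stdNormalCDF d1 - K * stdNormalCDF (d1 - σ * Real.sqrt τ)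

/-- Black–Scholes put price with zero interest and dividend rates. -/
noncomputable def bsPut (S K τ σ : ℝ) : ℝ := bsCall S K τ σ - S + K

/-- The denominator appearing in the PCLVG call price formula. -/
noncomputable def pclvgD (σ1 σ2 U τ : ℝ) : ℝ :=
  1 / σ1 + 1 / σ2 - (1 / σ2 - 1 / σ1) * Real.exp (-2 * U / (σ1 * τ))

/-- The explicit PCLVG call price `C^σ(U,K,τ)`. -/
noncomputable def pclvgCall (σ1 σ2 U K τ : ℝ) : ℝ :=
  if K < U then
    (U - K) +
      τ * Real.exp (-(U - K) / (σ1 * τ)) * (1 - Real.exp (-2 * K / (σ1 * τ))) /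
        pclvgD σ1 σ2 U τ
  else
    τ * Real.exp (-(K - U) / (σ2 * τ)) * (1 - Real.exp (-2 * U / (σ1 * τ))) /
      pclvgD σ1 σ2 U τ

/-- The PCLVG put price `P^σ(U,K,τ) = C^σ(U,K,τ) − (U − K)`. -/
noncomputable def pclvgPut (σ1 σ2 U K τ : ℝ) : ℝ := pclvgCall σ1 σ2 U K τ - (U - K)

/-- Black–Scholes call price extended to zero time-to-maturity by its intrinsic value. -/
noncomputable def bsCallExt (S K τ σ : ℝ) : ℝ :=
  if τ = 0 then max (S - K) 0 else bsCall S K τ σ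

/-- Black–Scholes put price extended to zero time-to-maturity by its intrinsic value. -/
noncomputable def bsPutExt (S K τ σ : ℝ) : ℝ :=
  if τ = 0 then max (K - S) 0 else bsPut S K τ σ

open Classical

/- ### Auxiliary lemmas -/

lemma gauss_integrable : MeasureTheory.Integrable (fun y : ℝ => Real.exp (-(y ^ 2) / 2)) := by
  have h := integrable_exp_neg_mul_sq (by norm_num : (0:ℝ) < 1/2)
  have he : (fun y : ℝ => Real.exp (-(y ^ 2) / 2)) = fun y : ℝ => Real.exp (-(1/2) * y ^ 2) := by
    funext y; congr 1; ring
  rw [he]; exact h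

lemma gauss_continuous : Continuous (fun y : ℝ => Real.exp (-(y ^ 2) / 2)) := by
  continuity

lemma stdNormalCDF_hasDerivAt (x : ℝ) :
    HasDerivAt stdNormalCDF ((Real.sqrt (2 * Real.pi))⁻¹ * Real.exp (-(x ^ 2) / 2)) x := by
  have hint := gauss_integrable
  have hcont := gauss_continuous
  have key : ∀ u : ℝ, stdNormalCDF u = (Real.sqrt (2 * Real.pi))⁻¹ *
      ((∫ y in Set.Iic (0:ℝ), Real.exp (-(y ^ 2) / 2)) +
        ∫ y in (0:ℝ)..u, Real.exp (-(y ^ 2) / 2)) := by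
    intro u
    rw [stdNormalCDF]
    congr 1
    have h := intervalIntegral.integral_Iic_sub_Iic (μ := volume)
      (f := fun y : ℝ => Real.exp (-(y ^ 2) / 2)) hint.integrableOn hint.integrableOn
      (a := (0:ℝ)) (b := u)
    linarith [h]
  have H : HasDerivAt (fun u : ℝ => (Real.sqrt (2 * Real.pi))⁻¹ *
      ((∫ y in Set.Iic (0:ℝ), Real.exp (-(y ^ 2) / 2)) +
        ∫ y in (0:ℝ)..u, Real.exp (-(y ^ 2) / 2)))
      ((Real.sqrt (2 * Real.pi))⁻¹ * Real.exp (-(x ^ 2) / 2)) x := by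
    exact ((intervalIntegral.integral_hasDerivAt_right hint.intervalIntegrable
      (hcont.stronglyMeasurableAtFilter _ _) hcont.continuousAt).const_add _).const_mul _
  exact H.congr_of_eventuallyEq (Filter.Eventually.of_forall key)

noncomputable def bsG (S K v : ℝ) : ℝ :=
  S * stdNormalCDF (Real.log (S / K) / v + v / 2) -
    K * stdNormalCDF (Real.log (S / K) / v - v / 2)

lemma bsCall_eq_bsG {S K τ σ : ℝ} (hτ : 0 < τ) (hσ : 0 < σ) :
    bsCall S K τ σ = bsG S K (σ * Real.sqrt τ) := by
  have hsq : Real.sqrt τ > 0 := Real.sqrt_pos.2 hτ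
  have hv : σ * Real.sqrt τ ≠ 0 := by positivity
  have h2 : (σ * Real.sqrt τ) ^ 2 = σ ^ 2 * τ := by
    rw [mul_pow, Real.sq_sqrt hτ.le]
  have h1 : (Real.log (S / K) + σ ^ 2 * τ / 2) / (σ * Real.sqrt τ)
      = Real.log (S / K) / (σ * Real.sqrt τ) + (σ * Real.sqrt τ) / 2 := by
    rw [← h2]; field_simp
  rw [bsCall, bsG]
  simp only [h1]
  congr 2
  ring

lemma bsG_hasDerivAt {S K : ℝ} (hS : 0 < S) (hK : 0 < K) {v : ℝ} (hv : 0 < v) :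
    HasDerivAt (bsG S K)
      (S * ((Real.sqrt (2 * Real.pi))⁻¹ *
        Real.exp (-((Real.log (S / K) / v + v / 2) ^ 2) / 2))) v := by
  set m := Real.log (S / K) with hm
  have hvne : v ≠ 0 := hv.ne'
  have hd1 : HasDerivAt (fun v : ℝ => m / v + v / 2) (m * -(v ^ 2)⁻¹ + 1 / 2) v := by
    have : HasDerivAt (fun v : ℝ => m / v) (m * -(v ^ 2)⁻¹) v := by
      simpa [div_eq_mul_inv] using (hasDerivAt_inv hvne).const_mul m
    exact this.add ((hasDerivAt_id v).div_const 2)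
  have hd2 : HasDerivAt (fun v : ℝ => m / v - v / 2) (m * -(v ^ 2)⁻¹ - 1 / 2) v := by
    have : HasDerivAt (fun v : ℝ => m / v) (m * -(v ^ 2)⁻¹) v := by
      simpa [div_eq_mul_inv] using (hasDerivAt_inv hvne).const_mul m
    exact this.sub ((hasDerivAt_id v).div_const 2)
  have hc1 := ((stdNormalCDF_hasDerivAt (m / v + v / 2)).comp v hd1).const_mul S
  have hc2 := ((stdNormalCDF_hasDerivAt (m / v - v / 2)).comp v hd2).const_mul K
  have H := hc1.sub hc2
  have hid : K * ((Real.sqrt (2 * Real.pi))⁻¹ * Real.exp (-((m / v - v / 2) ^ 2) / 2))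
      = S * ((Real.sqrt (2 * Real.pi))⁻¹ * Real.exp (-((m / v + v / 2) ^ 2) / 2)) := by
    have hexp : -((m / v + v / 2) ^ 2) / 2 = -((m / v - v / 2) ^ 2) / 2 + -m := by
      field_simp; ring
    have hSm : S * Real.exp (-m) = K := by
      rw [hm, Real.exp_neg, Real.exp_log (div_pos hS hK)]
      field_simp
    rw [hexp, Real.exp_add]
    calc K * ((Real.sqrt (2 * Real.pi))⁻¹ * Real.exp (-((m / v - v / 2) ^ 2) / 2))
        = (S * Real.exp (-m)) * ((Real.sqrt (2 * Real.pi))⁻¹ *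
            Real.exp (-((m / v - v / 2) ^ 2) / 2)) := by rw [hSm]
      _ = _ := by ring
  have hval : S * ((Real.sqrt (2 * Real.pi))⁻¹ *
        Real.exp (-((m / v + v / 2) ^ 2) / 2) * (m * -(v ^ 2)⁻¹ + 1 / 2)) -
      K * ((Real.sqrt (2 * Real.pi))⁻¹ *
        Real.exp (-((m / v - v / 2) ^ 2) / 2) * (m * -(v ^ 2)⁻¹ - 1 / 2))
      = S * ((Real.sqrt (2 * Real.pi))⁻¹ * Real.exp (-((m / v + v / 2) ^ 2) / 2)) := by
    linear_combination (1/2 - m * -(v ^ 2)⁻¹) * hid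
  rw [← hval]
  convert H using 2
  all_goals rfl

lemma bsG_strictMonoOn {S K : ℝ} (hS : 0 < S) (hK : 0 < K) :
    StrictMonoOn (bsG S K) (Set.Ioi 0) := by
  apply strictMonoOn_of_deriv_pos (convex_Ioi 0)
  · intro v hv
    exact (bsG_hasDerivAt hS hK hv).continuousAt.continuousWithinAt
  · intro v hv
    rw [interior_Ioi] at hv
    rw [(bsG_hasDerivAt hS hK hv).deriv]
    have := Real.sqrt_pos.2 (by positivity : (0:ℝ) < 2 * Real.pi)
    positivity

lemma bsCall_mono {S K τ : ℝ} (hS : 0 < S) (hK : 0 < K) (hτ : 0 < τ) {σ σ' : ℝ}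
    (hσ : 0 < σ) (h : σ ≤ σ') : bsCall S K τ σ ≤ bsCall S K τ σ' := by
  have hσ' : 0 < σ' := lt_of_lt_of_le hσ h
  have hsq : 0 < Real.sqrt τ := Real.sqrt_pos.2 hτ
  rw [bsCall_eq_bsG hτ hσ, bsCall_eq_bsG hτ hσ']
  exact (bsG_strictMonoOn hS hK).monotoneOn (Set.mem_Ioi.2 (by positivity))
    (Set.mem_Ioi.2 (by positivity)) (mul_le_mul_of_nonneg_right h hsq.le)

lemma bsCall_scale {S K τ σ c : ℝ} (hc : 0 < c) :
    bsCall S K τ (c * σ) = bsCall S K (c ^ 2 * τ) σ := by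
  have h : Real.sqrt (c ^ 2 * τ) = c * Real.sqrt τ := by
    rw [Real.sqrt_mul (sq_nonneg c), Real.sqrt_sq hc.le]
  rw [bsCall, bsCall, h]
  ring_nf

lemma pclvgD_pos {σ1 σ2 U τ : ℝ} (h1 : 0 < σ1) (h2 : 0 < σ2) (hU : 0 < U) (hτ : 0 < τ) :
    0 < pclvgD σ1 σ2 U τ := by
  rw [pclvgD]
  have hE0 : 0 < Real.exp (-2 * U / (σ1 * τ)) := Real.exp_pos _
  have hE1 : Real.exp (-2 * U / (σ1 * τ)) < 1 := by
    rw [Real.exp_lt_one_iff]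
    apply div_neg_of_neg_of_pos <;> nlinarith
  have ha : 0 < 1 / σ1 := by positivity
  have hb : 0 < 1 / σ2 := by positivity
  nlinarith [mul_pos ha hE0, mul_pos hb (sub_pos.2 hE1)]

lemma pclvg_key {σ1 σ2 U Ki Kj τ : ℝ} (h1 : 0 < σ1) (h2 : 0 < σ2) (hU : 0 < U)
    (hKi : 0 < Ki) (hKiU : Ki < U) (hjb : U + (U - Ki) * σ2 / σ1 ≤ Kj) (hτ : 0 < τ) :
    Ki / U * pclvgCall σ1 σ2 U Kj τ ≤ pclvgCall σ1 σ2 U Ki τ - (U - Ki) := by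
  have hjU : U < Kj :=
    lt_of_lt_of_le (lt_add_of_pos_right U (div_pos (mul_pos (by linarith) h2) h1)) hjb
  have hD := pclvgD_pos h1 h2 hU hτ
  rw [pclvgCall, pclvgCall, if_pos hKiU, if_neg (not_lt.2 hjU.le)]
  have hE1pos : (0:ℝ) < Real.exp (-(U - Ki) / (σ1 * τ)) := Real.exp_pos _
  have hE3pos : (0:ℝ) < Real.exp (-(Kj - U) / (σ2 * τ)) := Real.exp_pos _
  have hE4lt : Real.exp (-2 * U / (σ1 * τ)) < 1 := by
    rw [Real.exp_lt_one_iff]; apply div_neg_of_neg_of_pos <;> nlinarith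
  have hE2lt : Real.exp (-2 * Ki / (σ1 * τ)) < 1 := by
    rw [Real.exp_lt_one_iff]; apply div_neg_of_neg_of_pos <;> nlinarith
  have hstep1 : Real.exp (-(Kj - U) / (σ2 * τ)) ≤ Real.exp (-(U - Ki) / (σ1 * τ)) := by
    apply Real.exp_le_exp.2
    rw [div_le_div_iff₀ (by positivity) (by positivity)]
    have hjb' : (U - Ki) * σ2 ≤ (Kj - U) * σ1 := by
      have := (div_le_iff₀ h1).1 ((le_sub_iff_add_le').2 hjb)
      linarith
    nlinarith
  have hstep2 : Ki / U * (1 - Real.exp (-2 * U / (σ1 * τ)))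
      ≤ 1 - Real.exp (-2 * Ki / (σ1 * τ)) := by
    have ht0 : 0 < Ki / U := by positivity
    have ht1 : Ki / U ≤ 1 := (div_le_one hU).2 hKiU.le
    have hconv := convexOn_exp.2 (Set.mem_univ (0:ℝ))
      (Set.mem_univ (-2 * U / (σ1 * τ))) (by linarith : (0:ℝ) ≤ 1 - Ki / U) ht0.le
      (by ring)
    simp only [smul_eq_mul, mul_zero, zero_add, Real.exp_zero, mul_one] at hconv
    have harg : Ki / U * (-2 * U / (σ1 * τ)) = -2 * Ki / (σ1 * τ) := by
      field_simp
    rw [harg] at hconv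
    linarith
  have hmul : Ki / U * (Real.exp (-(Kj - U) / (σ2 * τ)) * (1 - Real.exp (-2 * U / (σ1 * τ))))
      ≤ Real.exp (-(U - Ki) / (σ1 * τ)) * (1 - Real.exp (-2 * Ki / (σ1 * τ)))  := by
    calc Ki / U * (Real.exp (-(Kj - U) / (σ2 * τ)) * (1 - Real.exp (-2 * U / (σ1 * τ))))
        ≤ Ki / U * (Real.exp (-(U - Ki) / (σ1 * τ)) * (1 - Real.exp (-2 * U / (σ1 * τ)))) := by
          apply mul_le_mul_of_nonneg_left _ (by positivity)
          apply mul_le_mul_of_nonneg_right hstep1 (by linarith)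
      _ = Real.exp (-(U - Ki) / (σ1 * τ)) * (Ki / U * (1 - Real.exp (-2 * U / (σ1 * τ)))) := by
          ring
      _ ≤ _ := mul_le_mul_of_nonneg_left hstep2 hE1pos.le
  have hgoal : Ki / U * (τ * Real.exp (-(Kj - U) / (σ2 * τ)) *
        (1 - Real.exp (-2 * U / (σ1 * τ))) / pclvgD σ1 σ2 U τ)
      ≤ τ * Real.exp (-(U - Ki) / (σ1 * τ)) * (1 - Real.exp (-2 * Ki / (σ1 * τ))) /
        pclvgD σ1 σ2 U τ := by
    rw [mul_div_assoc']
    apply (div_le_div_iff_of_pos_right hD).2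
    nlinarith [mul_le_mul_of_nonneg_left hmul hτ.le]
  linarith

/-- Robust super-replication of the up-and-out put (Proposition 6.1 of the
paper): along any continuous path satisfying the upper beliefs on implied skewness whenever
the spot is at the barrier, the liquidation value at `θ = min(H_U, T)` of the improved
Brown–Hobson–Rogers portfolio (forwards, puts struck at `K_i`, and short calls struck at
`K_{j̄}`) dominates the payoff of the up-and-out put. -/
theorem robust_uop_super_replication (n : ℕ) (Ks : Fin n → ℝ)
    (hKspos : ∀ j, 0 < Ks j) (hKsmono : StrictMono Ks)
    (T U K : ℝ) (hT : 0 < T) (hU : 0 < U) (hK : 0 < K) (hKU : K ≤ U)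
    (σs1 σs2 : ℝ) (h1 : 0 < σs1) (h2 : 0 < σs2)
    (IVstar : ℝ → ℝ → ℝ)
    (hIVstar : ∀ K' τ : ℝ, 0 < K' → 0 < τ → 0 < IVstar K' τ ∧
      bsCall U K' τ (IVstar K' τ) = pclvgCall σs1 σs2 U K' τ)
    (i jbar : Fin n) (hiK : Ks i ≤ K) (hiU : Ks i < U)
    (hjbar1 : U + (U - Ks i) * σs2 / σs1 ≤ Ks jbar)
    (hjbar2 : ∀ j, U + (U - Ks i) * σs2 / σs1 ≤ Ks j → Ks jbar ≤ Ks j)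
    (S : ℝ → ℝ) (hS : ContinuousOn S (Set.Icc 0 T))
    (hS0 : 0 ≤ S 0) (hS0U : S 0 ≤ U)
    (IV : ℝ → Fin n → ℝ → ℝ)
    (hIVpos : ∀ t : ℝ, 0 ≤ t → t < T → ∀ j τ, 0 < τ → τ ≤ T - t → 0 < IV t j τ)
    (hbeliefs : ∀ t : ℝ, 0 ≤ t → t < T → S t = U →
      ∃ c : ℝ, 0 < c ∧ ∀ τ : ℝ, 0 < τ → τ ≤ T - t →
        (∀ i', Ks i' < U → c * IVstar (Ks i') (c ^ 2 * τ) ≤ IV t i' τ) ∧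
        (∀ j, U < Ks j → IV t j τ ≤ c * IVstar (Ks j) (c ^ 2 * τ))) :
    (Ks i - K) / (U - Ks i) *
        (S (if {t : ℝ | t ∈ Set.Icc 0 T ∧ U ≤ S t}.Nonempty
              then min (sInf {t : ℝ | t ∈ Set.Icc 0 T ∧ U ≤ S t}) T else T) - U) +
      (U - K) / (U - Ks i) *
        (bsPutExt
            (S (if {t : ℝ | t ∈ Set.Icc 0 T ∧ U ≤ S t}.Nonempty
                  then min (sInf {t : ℝ | t ∈ Set.Icc 0 T ∧ U ≤ S t}) T else T))
            (Ks i)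
            (T - (if {t : ℝ | t ∈ Set.Icc 0 T ∧ U ≤ S t}.Nonempty
                    then min (sInf {t : ℝ | t ∈ Set.Icc 0 T ∧ U ≤ S t}) T else T))
            (IV (if {t : ℝ | t ∈ Set.Icc 0 T ∧ U ≤ S t}.Nonempty
                   then min (sInf {t : ℝ | t ∈ Set.Icc 0 T ∧ U ≤ S t}) T else T) i
              (T - (if {t : ℝ | t ∈ Set.Icc 0 T ∧ U ≤ S t}.Nonempty
                      then min (sInf {t : ℝ | t ∈ Set.Icc 0 T ∧ U ≤ S t}) T else T))) -
          Ks i / U *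
            bsCallExt
              (S (if {t : ℝ | t ∈ Set.Icc 0 T ∧ U ≤ S t}.Nonempty
                    then min (sInf {t : ℝ | t ∈ Set.Icc 0 T ∧ U ≤ S t}) T else T))
              (Ks jbar)
              (T - (if {t : ℝ | t ∈ Set.Icc 0 T ∧ U ≤ S t}.Nonempty
                      then min (sInf {t : ℝ | t ∈ Set.Icc 0 T ∧ U ≤ S t}) T else T))
              (IV (if {t : ℝ | t ∈ Set.Icc 0 T ∧ U ≤ S t}.Nonempty
                     then min (sInf {t : ℝ | t ∈ Set.Icc 0 T ∧ U ≤ S t}) T else T) jbar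
                (T - (if {t : ℝ | t ∈ Set.Icc 0 T ∧ U ≤ S t}.Nonempty
                        then min (sInf {t : ℝ | t ∈ Set.Icc 0 T ∧ U ≤ S t}) T else T)))) ≥
      max
        (K - S (if {t : ℝ | t ∈ Set.Icc 0 T ∧ U ≤ S t}.Nonempty
                  then min (sInf {t : ℝ | t ∈ Set.Icc 0 T ∧ U ≤ S t}) T else T)) 0 *
        (if {t : ℝ | t ∈ Set.Icc 0 T ∧ U ≤ S t} = ∅ then 1 else 0) := by

  set A := {t : ℝ | t ∈ Set.Icc 0 T ∧ U ≤ S t} with hA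
  have hKi : 0 < Ks i := hKspos i
  have hjU : U < Ks jbar :=
    lt_of_lt_of_le (lt_add_of_pos_right U (div_pos (mul_pos (by linarith) h2) h1)) hjbar1
  have hUKi : 0 < U - Ks i := by linarith
  by_cases hne : A.Nonempty
  · -- the barrier is hit
    simp only [if_pos hne, if_neg (Set.nonempty_iff_ne_empty.1 hne), mul_zero]
    have hbdd : BddBelow A := ⟨0, fun t ht => ht.1.1⟩
    have hclosed : IsClosed A := by
      have hAeq : A = Set.Icc 0 T ∩ S ⁻¹' Set.Ici U := rfl
      rw [hAeq]
      exact hS.preimage_isClosed_of_isClosed isClosed_Icc isClosed_Ici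
    have hmem : sInf A ∈ A := hclosed.csInf_mem hne hbdd
    have hH0 : 0 ≤ sInf A := hmem.1.1
    have hHT : sInf A ≤ T := hmem.1.2
    rw [min_eq_left hHT]
    have hSH : S (sInf A) = U := by
      refine le_antisymm ?_ hmem.2
      rcases eq_or_lt_of_le hH0 with h0 | h0
      · rw [← h0]; exact hS0U
      · have hlt : ∀ t ∈ Set.Ico 0 (sInf A), S t ≤ U := by
          intro t ht
          by_contra hc
          push_neg at hc
          have htA : t ∈ A := ⟨⟨ht.1, le_trans ht.2.le hHT⟩, hc.le⟩
          exact absurd (csInf_le hbdd htA) (not_le.2 ht.2)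
        have hnb : (nhdsWithin (sInf A) (Set.Ico 0 (sInf A))).NeBot := by
          rw [← mem_closure_iff_nhdsWithin_neBot, closure_Ico (ne_of_lt h0)]
          exact ⟨hH0, le_refl _⟩
        have htend : Filter.Tendsto S (nhdsWithin (sInf A) (Set.Ico 0 (sInf A))) (nhds (S (sInf A))) :=
          (hS.continuousWithinAt ⟨hH0, hHT⟩).mono (fun t ht => ⟨ht.1, le_trans ht.2.le hHT⟩)
        exact le_of_tendsto htend (eventually_mem_nhdsWithin.mono hlt)
    rcases eq_or_lt_of_le hHT with hHeq | hHlt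
    · -- hit exactly at maturity
      rw [hSH]
      simp only [hHeq, sub_self]
      rw [bsPutExt, bsCallExt, if_pos rfl, if_pos rfl]
      rw [max_eq_right (by linarith : Ks i - U ≤ 0), max_eq_right (by linarith : U - Ks jbar ≤ 0)]
      have : (Ks i - K) / (U - Ks i) * (U - U) +
          (U - K) / (U - Ks i) * (0 - Ks i / U * 0) = 0 := by ring
      linarith [this]
    · -- hit strictly before maturity
      have hτ : 0 < T - sInf A := by linarith
      rw [hSH]
      rw [bsPutExt, bsCallExt, if_neg hτ.ne', if_neg hτ.ne', bsPut]
      obtain ⟨c, hc, hcb⟩ := hbeliefs (sInf A) hH0 hHlt hSH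
      obtain ⟨hput, hcall⟩ := hcb (T - sInf A) hτ le_rfl
      have hlow := hput i hiU
      have hhigh := hcall jbar hjU
      have hσp : 0 < IV (sInf A) i (T - sInf A) := hIVpos _ hH0 hHlt i _ hτ le_rfl
      have hσc : 0 < IV (sInf A) jbar (T - sInf A) := hIVpos _ hH0 hHlt jbar _ hτ le_rfl
      have hτ' : 0 < c ^ 2 * (T - sInf A) := by positivity
      obtain ⟨hIVs1pos, hIVs1eq⟩ := hIVstar (Ks i) (c ^ 2 * (T - sInf A)) hKi hτ'
      obtain ⟨hIVs2pos, hIVs2eq⟩ := hIVstar (Ks jbar) (c ^ 2 * (T - sInf A)) (hKspos jbar) hτ'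
      have hput_chain : pclvgCall σs1 σs2 U (Ks i) (c ^ 2 * (T - sInf A)) - U + Ks i
          ≤ bsCall U (Ks i) (T - sInf A) (IV (sInf A) i (T - sInf A)) - U + Ks i := by
        have h1' : bsCall U (Ks i) (T - sInf A) (c * IVstar (Ks i) (c ^ 2 * (T - sInf A)))
            ≤ bsCall U (Ks i) (T - sInf A) (IV (sInf A) i (T - sInf A)) :=
          bsCall_mono hU hKi hτ (mul_pos hc hIVs1pos) hlow
        rw [bsCall_scale hc, hIVs1eq] at h1'
        linarith
      have hcall_chain : bsCall U (Ks jbar) (T - sInf A) (IV (sInf A) jbar (T - sInf A))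
          ≤ pclvgCall σs1 σs2 U (Ks jbar) (c ^ 2 * (T - sInf A)) := by
        have h2' : bsCall U (Ks jbar) (T - sInf A) (IV (sInf A) jbar (T - sInf A))
            ≤ bsCall U (Ks jbar) (T - sInf A) (c * IVstar (Ks jbar) (c ^ 2 * (T - sInf A))) :=
          bsCall_mono hU (hKspos jbar) hτ hσc hhigh
        rw [bsCall_scale hc, hIVs2eq] at h2'
        exact h2'
      have hkey := pclvg_key h1 h2 hU hKi hiU hjbar1 hτ'
      have hinner : 0 ≤ bsCall U (Ks i) (T - sInf A) (IV (sInf A) i (T - sInf A)) - U + Ks i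
          - Ks i / U * bsCall U (Ks jbar) (T - sInf A) (IV (sInf A) jbar (T - sInf A)) := by
        have hKiU0 : 0 ≤ Ks i / U := by positivity
        have := mul_le_mul_of_nonneg_left hcall_chain hKiU0
        linarith
      have hcoef : 0 ≤ (U - K) / (U - Ks i) := div_nonneg (by linarith) hUKi.le
      have hterm : 0 ≤ (U - K) / (U - Ks i) *
          (bsCall U (Ks i) (T - sInf A) (IV (sInf A) i (T - sInf A)) - U + Ks i -
            Ks i / U * bsCall U (Ks jbar) (T - sInf A) (IV (sInf A) jbar (T - sInf A))) :=
        mul_nonneg hcoef hinner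
      nlinarith [hterm]
  · -- the barrier is never hit
    have hAe : A = ∅ := Set.not_nonempty_iff_eq_empty.1 hne
    simp only [if_neg hne, if_pos hAe, mul_one, sub_self]
    rw [bsPutExt, bsCallExt, if_pos rfl, if_pos rfl]
    have hsT : S T < U := by
      by_contra hc
      push_neg at hc
      exact hne ⟨T, ⟨hT.le, le_refl T⟩, hc⟩
    rw [max_eq_right (by linarith : S T - Ks jbar ≤ 0), mul_zero, sub_zero]
    rw [ge_iff_le, div_mul_eq_mul_div, div_mul_eq_mul_div, ← add_div,
      le_div_iff₀ hUKi]
    rcases le_total (S T) (Ks i) with hsKi | hsKi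
    · rw [max_eq_left (by linarith : (0:ℝ) ≤ Ks i - S T),
        max_eq_left (by linarith : (0:ℝ) ≤ K - S T)]
      nlinarith
    · rw [max_eq_right (by linarith : Ks i - S T ≤ 0)]
      rcases le_total (S T) K with hsK | hsK
      · rw [max_eq_left (by linarith : (0:ℝ) ≤ K - S T)]
        nlinarith [mul_nonneg (by linarith : (0:ℝ) ≤ U - K) (by linarith : (0:ℝ) ≤ S T - Ks i)]
      · rw [max_eq_right (by linarith : K - S T ≤ 0)]
        nlinarith [mul_nonneg (by linarith : (0:ℝ) ≤ K - Ks i) (by linarith : (0:ℝ) ≤ U - S T)]
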